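/- arXiv:2411.12653 — 2 statements merged into one kernel-verified Lean document; each statement's English description precedes it below -/
import Mathlib

section
/- (Lemma: deviation reduction to independent blocks.) Define ψ := sup_{f ∈ ℋ} (R_SPO(f) − R̂_{SPO,n}(f)), and for an independent block sample B̃ = (B̃_1, …, B̃_m) ∼ P̃ define ψ̃(B̃) := sup_{f ∈ ℋ} (R_SPO(f) − (1/m) ∑_{j=1}^m ĝ_f(B̃_j)). If the trajectory satisfies the (m, β)-independent-block approximation for some β ≥ 0, then for every ε ∈ ℝ: μ(ψ > ε) ≤ 2·P̃( ψ̃ − E_{P̃}[ψ̃] > ε − E_{P̃}[ψ̃] ) + 2mβ. -/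
open MeasureTheory
open scoped RealInnerProductSpace BigOperators

noncomputable section

abbrev Vec (d : ℕ) := EuclideanSpace ℝ (Fin d)

/-- The SPO loss: `ℓ_SPO(ŷ, y) = ⟨y, w*(ŷ)⟩ − ⟨y, w*(y)⟩`. -/
def lSPO {d : ℕ} (wStar : Vec d → Vec d) (yhat y : Vec d) : ℝ :=
  ⟪y, wStar yhat⟫ - ⟪y, wStar y⟫

/-- The linear optimization gap of `S` at `y`. -/
def omegaS {d : ℕ} (S : Set (Vec d)) (y : Vec d) : ℝ :=
  sSup ((fun w => ⟪y, w⟫) '' S) - sInf ((fun w => ⟪y, w⟫) '' S)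

/-- Stationarity of the sequence `Y`. -/
def IsStationarySPO {d : ℕ} {Ω : Type*} [MeasurableSpace Ω] (μ : Measure Ω)
    (Y : ℕ → Ω → Vec d) : Prop :=
  ∀ t k n : ℕ,
    μ.map (fun ω => fun i : Fin (n + 1) => Y (t + i) ω) =
      μ.map (fun ω => fun i : Fin (n + 1) => Y (t + k + i) ω)

/-- The SPO risk of a predictor with fixed memory `l`. -/
def RSPO {d : ℕ} {Ω : Type*} [MeasurableSpace Ω] (μ : Measure Ω)
    (Y : ℕ → Ω → Vec d) (wStar : Vec d → Vec d) (l : ℕ)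
    (f : (Fin l → Vec d) → Vec d) : ℝ :=
  ∫ ω, lSPO wStar (f (fun i => Y i ω)) (Y l ω) ∂μ

/-- The `j`-th extended block `Ê_{j+1} = (Y_{ja}, …, Y_{(j+1)a+l−1})` (0-indexed `j`). -/
def extBlock {d : ℕ} {Ω : Type*} (Y : ℕ → Ω → Vec d) (a l j : ℕ) (ω : Ω) :
    Fin (a + l) → Vec d :=
  fun i => Y (j * a + i) ω

/-- The block empirical SPO risk `ĝ_f(Ê)`. -/
def blockRisk {d : ℕ} (wStar : Vec d → Vec d) (a l : ℕ)
    (f : (Fin l → Vec d) → Vec d) (e : Fin (a + l) → Vec d) : ℝ :=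
  (a : ℝ)⁻¹ * ∑ i : Fin a, lSPO wStar
    (f (fun k => e ⟨i.1 + k.1, by have h1 := i.isLt; have h2 := k.isLt; omega⟩))
    (e ⟨i.1 + l, by have h1 := i.isLt; omega⟩)

/-- The empirical SPO risk `R̂_{SPO,n}(f)` over the length `n = 2am + l` trajectory. -/
def empRisk {d : ℕ} {Ω : Type*} (Y : ℕ → Ω → Vec d) (wStar : Vec d → Vec d)
    (a l m : ℕ) (f : (Fin l → Vec d) → Vec d) (ω : Ω) : ℝ :=
  ((2 * m : ℕ) : ℝ)⁻¹ * ∑ j : Fin (2 * m), blockRisk wStar a l f (extBlock Y a l j ω)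

/-- The common law `ν` of the extended blocks. -/
def nuBlock {d : ℕ} {Ω : Type*} [MeasurableSpace Ω] (μ : Measure Ω)
    (Y : ℕ → Ω → Vec d) (a l : ℕ) : Measure (Fin (a + l) → Vec d) :=
  μ.map (fun ω => extBlock Y a l 0 ω)

/-- The independent-blocks measure `P̃ = ν^{⊗m}`. -/
def Ptilde {d : ℕ} {Ω : Type*} [MeasurableSpace Ω] (μ : Measure Ω)
    (Y : ℕ → Ω → Vec d) (a l m : ℕ) : Measure (Fin m → Fin (a + l) → Vec d) :=
  Measure.pi fun _ : Fin m => nuBlock μ Y a l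

/-- The `m` odd extended blocks `𝒴₀ = (Ê_1, Ê_3, …, Ê_{2m−1})`. -/
def oddBlocks {d : ℕ} {Ω : Type*} (Y : ℕ → Ω → Vec d) (a l m : ℕ) (ω : Ω) :
    Fin m → Fin (a + l) → Vec d :=
  fun j => extBlock Y a l (2 * j) ω

/-- The `(m, β)`-independent-block approximation. -/
def IndepBlockApprox {d : ℕ} {Ω : Type*} [MeasurableSpace Ω] (μ : Measure Ω)
    (Y : ℕ → Ω → Vec d) (a l m : ℕ) (β : ℝ) : Prop :=
  ∀ A : Set (Fin m → Fin (a + l) → Vec d), MeasurableSet A →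
    |(μ {ω | oddBlocks Y a l m ω ∈ A}).toReal - (Ptilde μ Y a l m A).toReal| ≤ m * β

/-- The empirical block Rademacher complexity of `ℋ` given blocks `B`. -/
def radEmp {d : ℕ} (wStar : Vec d → Vec d) (a l m : ℕ)
    (H : Set ((Fin l → Vec d) → Vec d)) (B : Fin m → Fin (a + l) → Vec d) : ℝ :=
  ((2 : ℝ) ^ m)⁻¹ * ∑ s : Fin m → Bool,
    ⨆ f : H, (m : ℝ)⁻¹ * ∑ j : Fin m,
      (if s j then (1 : ℝ) else -1) * blockRisk wStar a l f.1 (B j)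

/-- The block Rademacher complexity `ℜ_m(ℋ)`. -/
def radExp {d : ℕ} {Ω : Type*} [MeasurableSpace Ω] (μ : Measure Ω)
    (Y : ℕ → Ω → Vec d) (wStar : Vec d → Vec d) (a l m : ℕ)
    (H : Set ((Fin l → Vec d) → Vec d)) : ℝ :=
  ∫ B, radEmp wStar a l m H B ∂(Ptilde μ Y a l m)

/-- The uniform deviation `ψ` over the trajectory. -/
def devTraj {d : ℕ} {Ω : Type*} [MeasurableSpace Ω] (μ : Measure Ω)
    (Y : ℕ → Ω → Vec d) (wStar : Vec d → Vec d) (a l m : ℕ)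
    (H : Set ((Fin l → Vec d) → Vec d)) (ω : Ω) : ℝ :=
  ⨆ f : H, (RSPO μ Y wStar l f.1 - empRisk Y wStar a l m f.1 ω)

/-- The uniform deviation `ψ̃` over an independent block sample. -/
def devBlocks {d : ℕ} {Ω : Type*} [MeasurableSpace Ω] (μ : Measure Ω)
    (Y : ℕ → Ω → Vec d) (wStar : Vec d → Vec d) (a l m : ℕ)
    (H : Set ((Fin l → Vec d) → Vec d)) (B : Fin m → Fin (a + l) → Vec d) : ℝ :=
  ⨆ f : H, (RSPO μ Y wStar l f.1 -
    (m : ℝ)⁻¹ * ∑ j : Fin m, blockRisk wStar a l f.1 (B j))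


private lemma sum_range_double (m : ℕ) (g : ℕ → ℝ) :
    ∑ i ∈ Finset.range (2 * m), g i =
      ∑ i ∈ Finset.range m, g (2 * i) + ∑ i ∈ Finset.range m, g (2 * i + 1) := by
  induction m with
  | zero => simp
  | succ k ih =>
    have h : 2 * (k + 1) = (2 * k + 1) + 1 := by ring
    rw [h, Finset.sum_range_succ, Finset.sum_range_succ, ih,
      Finset.sum_range_succ, Finset.sum_range_succ]
    ring

/-- Deviation reduction to independent blocks. -/
theorem deviation_reduction_to_independent_blocks {d : ℕ} {Ω : Type*} [MeasurableSpace Ω]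
    (μ : Measure Ω) [IsProbabilityMeasure μ]
    (S : Set (Vec d)) (hS : S.Nonempty) (hSc : IsCompact S)
    (wStar : Vec d → Vec d) (hwStar : Measurable wStar)
    (hOracle : ∀ c : Vec d, wStar c ∈ S ∧ ∀ w ∈ S, ⟪c, wStar c⟫ ≤ ⟪c, w⟫)
    (Y : ℕ → Ω → Vec d) (hY : ∀ t, Measurable (Y t)) (hstat : IsStationarySPO μ Y)
    (l a m n : ℕ) (hl : 1 ≤ l) (ha : l < a) (hm : 1 ≤ m) (hn : n = 2 * a * m + l)
    (H : Set ((Fin l → Vec d) → Vec d)) (hHcount : H.Countable)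
    (hHmeas : ∀ f ∈ H, Measurable f)
    (𝒴 : Set (Vec d)) (h𝒴 : Bornology.IsBounded 𝒴) (hYmem : ∀ t, ∀ᵐ ω ∂μ, Y t ω ∈ 𝒴)
    (β : ℝ) (hβ : 0 ≤ β) (hIB : IndepBlockApprox μ Y a l m β) :
    ∀ ε : ℝ,
      (μ {ω | devTraj μ Y wStar a l m H ω > ε}).toReal ≤
        2 * ((Ptilde μ Y a l m) {B | devBlocks μ Y wStar a l m H B -
              (∫ B', devBlocks μ Y wStar a l m H B' ∂(Ptilde μ Y a l m)) >
            ε - (∫ B', devBlocks μ Y wStar a l m H B' ∂(Ptilde μ Y a l m))}).toReal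
          + 2 * m * β := by
  intro ε
  classical
  -- boundedness constants
  obtain ⟨C1, hC1⟩ := h𝒴.exists_norm_le
  obtain ⟨C2, hC2⟩ := hSc.isBounded.exists_norm_le
  set C1' : ℝ := max C1 0 with hC1'def
  set C2' : ℝ := max C2 0 with hC2'def
  have hC1'0 : 0 ≤ C1' := le_max_right _ _
  have hC2'0 : 0 ≤ C2' := le_max_right _ _
  have hy' : ∀ y ∈ 𝒴, ‖y‖ ≤ C1' := fun y hy => (hC1 y hy).trans (le_max_left _ _)
  have hw' : ∀ c : Vec d, ‖wStar c‖ ≤ C2' :=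
    fun c => (hC2 _ (hOracle c).1).trans (le_max_left _ _)
  set K : ℝ := 2 * (C1' * C2') with hKdef
  have hlnn : ∀ yhat y : Vec d, 0 ≤ lSPO wStar yhat y := by
    intro yhat y
    have h2 := (hOracle y).2 (wStar yhat) (hOracle yhat).1
    simpa [lSPO] using sub_nonneg.mpr h2
  have hib : ∀ yhat y : Vec d, y ∈ 𝒴 → |lSPO wStar yhat y| ≤ K := by
    intro yhat y hy
    have h1 : |⟪y, wStar yhat⟫| ≤ C1' * C2' :=
      (abs_real_inner_le_norm _ _).trans
        (mul_le_mul (hy' y hy) (hw' yhat) (norm_nonneg _) hC1'0)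
    have h2 : |⟪y, wStar y⟫| ≤ C1' * C2' :=
      (abs_real_inner_le_norm _ _).trans
        (mul_le_mul (hy' y hy) (hw' y) (norm_nonneg _) hC1'0)
    have h3 : |lSPO wStar yhat y| ≤ |⟪y, wStar yhat⟫| + |⟪y, wStar y⟫| := by
      simp only [lSPO, sub_eq_add_neg]
      exact (abs_add_le _ _).trans (by rw [abs_neg])
    linarith
  have hR_le : ∀ f : (Fin l → Vec d) → Vec d, RSPO μ Y wStar l f ≤ K := by
    intro f
    have hb : ∀ᵐ ω ∂μ, ‖lSPO wStar (f (fun i => Y i ω)) (Y l ω)‖ ≤ K :=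
      (hYmem l).mono fun ω h => by
        simpa [Real.norm_eq_abs] using hib (f (fun i => Y i ω)) (Y l ω) h
    have hnorm := norm_integral_le_of_norm_le_const (μ := μ) hb
    rw [probReal_univ, mul_one] at hnorm
    exact le_trans (le_abs_self _) (by simpa [Real.norm_eq_abs, RSPO] using hnorm)
  have hbr_nonneg : ∀ (f : (Fin l → Vec d) → Vec d) (e : Fin (a + l) → Vec d),
      0 ≤ blockRisk wStar a l f e := by
    intro f e
    exact mul_nonneg (inv_nonneg.mpr (Nat.cast_nonneg a))
      (Finset.sum_nonneg fun i _ => hlnn _ _)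
  have havg_nonneg : ∀ (f : (Fin l → Vec d) → Vec d) (B : Fin m → Fin (a + l) → Vec d),
      0 ≤ (m : ℝ)⁻¹ * ∑ j : Fin m, blockRisk wStar a l f (B j) := by
    intro f B
    exact mul_nonneg (inv_nonneg.mpr (Nat.cast_nonneg m))
      (Finset.sum_nonneg fun j _ => hbr_nonneg _ _)
  -- boundedness of the deviation family
  have hbdd : ∀ B : Fin m → Fin (a + l) → Vec d,
      BddAbove (Set.range fun f : H => RSPO μ Y wStar l f.1 -
        (m : ℝ)⁻¹ * ∑ j : Fin m, blockRisk wStar a l f.1 (B j)) := by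
    intro B
    refine ⟨K, ?_⟩
    rintro x ⟨f, rfl⟩
    have := havg_nonneg f.1 B
    have := hR_le f.1
    linarith
  have hle_dev : ∀ (B : Fin m → Fin (a + l) → Vec d) (f : H),
      RSPO μ Y wStar l f.1 - (m : ℝ)⁻¹ * ∑ j : Fin m, blockRisk wStar a l f.1 (B j) ≤
        devBlocks μ Y wStar a l m H B := by
    intro B f
    exact le_ciSup (hbdd B) f
  -- the level set A
  set P := Ptilde μ Y a l m with hP
  set c : ℝ := ∫ B', devBlocks μ Y wStar a l m H B' ∂P with hc
  set A : Set (Fin m → Fin (a + l) → Vec d) :=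
    {B | devBlocks μ Y wStar a l m H B > ε} with hA
  have hset : {B | devBlocks μ Y wStar a l m H B - c > ε - c} = A := by
    ext B
    simp only [hA, Set.mem_setOf_eq, gt_iff_lt, sub_lt_sub_iff_right]
  -- measurability of A
  have hmeas_block : ∀ f : (Fin l → Vec d) → Vec d, Measurable f →
      Measurable (fun e : Fin (a + l) → Vec d => blockRisk wStar a l f e) := by
    intro f hf
    apply Measurable.const_mul
    apply Finset.measurable_sum
    intro i _
    have hg : Measurable (fun e : Fin (a + l) → Vec d =>
        f (fun k => e ⟨i.1 + k.1, by have h1 := i.isLt; have h2 := k.isLt; omega⟩)) :=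
      hf.comp (measurable_pi_lambda _ fun k => measurable_pi_apply _)
    have h1 : Measurable (fun e : Fin (a + l) → Vec d =>
        e ⟨i.1 + l, by have h1 := i.isLt; omega⟩) := measurable_pi_apply _
    exact (h1.inner (hwStar.comp hg)).sub (h1.inner (hwStar.comp h1))
  have hmeas_term : ∀ f : H, Measurable (fun B : Fin m → Fin (a + l) → Vec d =>
      RSPO μ Y wStar l f.1 - (m : ℝ)⁻¹ * ∑ j : Fin m, blockRisk wStar a l f.1 (B j)) := by
    intro f
    apply Measurable.const_sub
    apply Measurable.const_mul
    apply Finset.measurable_sum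
    intro j _
    exact (hmeas_block f.1 (hHmeas f.1 f.2)).comp (measurable_pi_apply j)
  have hA_meas : MeasurableSet A := by
    by_cases hHe : H.Nonempty
    · haveI : Nonempty H := hHe.to_subtype
      have hAeq : A = ⋃ f : H, {B | RSPO μ Y wStar l f.1 -
          (m : ℝ)⁻¹ * ∑ j : Fin m, blockRisk wStar a l f.1 (B j) > ε} := by
        ext B
        simp only [hA, Set.mem_setOf_eq, Set.mem_iUnion, gt_iff_lt]
        constructor
        · intro h
          by_contra hcon
          push_neg at hcon
          exact absurd (ciSup_le fun f : H => hcon f) (not_le.mpr h)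
        · rintro ⟨f, hf⟩
          exact lt_of_lt_of_le hf (hle_dev B f)
      rw [hAeq]
      haveI : Countable H := hHcount.to_subtype
      exact MeasurableSet.iUnion fun f =>
        measurableSet_lt measurable_const (hmeas_term f)
    · haveI : IsEmpty H :=
        Set.isEmpty_coe_sort.mpr (Set.not_nonempty_iff_eq_empty.mp hHe)
      have hAeq : A = {B | ε < 0} := by
        ext B
        simp [hA, devBlocks, Real.iSup_of_isEmpty]
      rw [hAeq]
      by_cases hε : ε < 0 <;> simp [hε]
  -- even blocks
  set evenB : Ω → Fin m → Fin (a + l) → Vec d :=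
    fun ω j => extBlock Y a l (2 * (j : ℕ) + 1) ω with hevenB
  -- half-splitting of the empirical risk
  have hkey : ∀ ω : Ω, devTraj μ Y wStar a l m H ω ≤
      (devBlocks μ Y wStar a l m H (oddBlocks Y a l m ω) +
        devBlocks μ Y wStar a l m H (evenB ω)) / 2 := by
    intro ω
    by_cases hHe : H.Nonempty
    · haveI : Nonempty H := hHe.to_subtype
      apply ciSup_le
      intro f
      have hm' : (m : ℝ) ≠ 0 := Nat.cast_ne_zero.mpr (by omega)
      have hsplit : (∑ j : Fin (2 * m), blockRisk wStar a l f.1 (extBlock Y a l (j : ℕ) ω)) =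
          (∑ j : Fin m, blockRisk wStar a l f.1 (extBlock Y a l (2 * (j : ℕ)) ω)) +
            ∑ j : Fin m, blockRisk wStar a l f.1 (extBlock Y a l (2 * (j : ℕ) + 1) ω) := by
        rw [Fin.sum_univ_eq_sum_range (fun j => blockRisk wStar a l f.1 (extBlock Y a l j ω)),
          sum_range_double,
          Fin.sum_univ_eq_sum_range (fun j => blockRisk wStar a l f.1 (extBlock Y a l (2 * j) ω)),
          Fin.sum_univ_eq_sum_range (fun j => blockRisk wStar a l f.1 (extBlock Y a l (2 * j + 1) ω))]
      have hemp : empRisk Y wStar a l m f.1 ω =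
          ((m : ℝ)⁻¹ * ∑ j : Fin m, blockRisk wStar a l f.1 (oddBlocks Y a l m ω j)) / 2 +
            ((m : ℝ)⁻¹ * ∑ j : Fin m, blockRisk wStar a l f.1 (evenB ω j)) / 2 := by
        have h2m : ((2 * m : ℕ) : ℝ) = 2 * (m : ℝ) := by push_cast; ring
        simp only [empRisk, oddBlocks, hevenB]
        rw [hsplit, h2m, mul_inv]
        ring
      have h1 := hle_dev (oddBlocks Y a l m ω) f
      have h2 := hle_dev (evenB ω) f
      rw [hemp] at *
      linarith
    · haveI : IsEmpty H :=
        Set.isEmpty_coe_sort.mpr (Set.not_nonempty_iff_eq_empty.mp hHe)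
      simp [devTraj, devBlocks, Real.iSup_of_isEmpty]
  have hTsub : {ω | devTraj μ Y wStar a l m H ω > ε} ⊆
      (oddBlocks Y a l m) ⁻¹' A ∪ evenB ⁻¹' A := by
    intro ω hω
    by_contra hcon
    simp only [Set.mem_union, Set.mem_preimage, hA, Set.mem_setOf_eq, gt_iff_lt,
      not_or, not_lt] at hcon
    have := hkey ω
    have hω' : ε < devTraj μ Y wStar a l m H ω := hω
    linarith [hcon.1, hcon.2]
  -- stationarity: even preimage has same measure as odd preimage
  have ha1 : 1 ≤ a := by omega
  obtain ⟨m', rfl⟩ : ∃ m', m = m' + 1 := ⟨m - 1, by omega⟩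
  set n₀ : ℕ := 2 * m' * a + a + l - 1 with hn₀
  have hpos : 1 ≤ 2 * m' * a + a + l := hl.trans (Nat.le_add_left l _)
  have hn₀1 : n₀ + 1 = 2 * m' * a + a + l := by
    rw [hn₀]; exact Nat.sub_add_cancel hpos
  have hidx : ∀ (j : Fin (m' + 1)) (i : Fin (a + l)),
      2 * (j : ℕ) * a + (i : ℕ) < n₀ + 1 := by
    intro j i
    rw [hn₀1]
    have hj : 2 * (j : ℕ) * a ≤ 2 * m' * a :=
      Nat.mul_le_mul_right a (by have := j.isLt; omega)
    have hi : (i : ℕ) < a + l := i.isLt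
    calc 2 * (j : ℕ) * a + (i : ℕ) < 2 * (j : ℕ) * a + (a + l) := Nat.add_lt_add_left hi _
      _ ≤ 2 * m' * a + (a + l) := Nat.add_le_add_right hj _
      _ = 2 * m' * a + a + l := (Nat.add_assoc _ _ _).symm
  set g : (Fin (n₀ + 1) → Vec d) → Fin (m' + 1) → Fin (a + l) → Vec d :=
    fun v j i => v ⟨2 * (j : ℕ) * a + (i : ℕ), hidx j i⟩ with hg
  have hgm : Measurable g :=
    measurable_pi_lambda _ fun j => measurable_pi_lambda _ fun i => measurable_pi_apply _
  have hFo : oddBlocks Y a l (m' + 1) = g ∘ (fun ω => fun i : Fin (n₀ + 1) => Y (0 + (i : ℕ)) ω) := by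
    funext ω j i
    simp only [oddBlocks, extBlock, Function.comp_apply, hg]
    have h : 2 * (j : ℕ) * a + (i : ℕ) = 0 + (2 * (j : ℕ) * a + (i : ℕ)) := by ring
    exact congrFun (congrArg Y h) ω
  have hFe : evenB = g ∘ (fun ω => fun i : Fin (n₀ + 1) => Y (0 + a + (i : ℕ)) ω) := by
    funext ω j i
    simp only [hevenB, extBlock, Function.comp_apply, hg]
    have h : (2 * (j : ℕ) + 1) * a + (i : ℕ) = 0 + a + (2 * (j : ℕ) * a + (i : ℕ)) := by ring
    exact congrFun (congrArg Y h) ω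
  have hV0 : Measurable (fun ω => fun i : Fin (n₀ + 1) => Y (0 + (i : ℕ)) ω) :=
    measurable_pi_lambda _ fun i => hY _
  have hVa : Measurable (fun ω => fun i : Fin (n₀ + 1) => Y (0 + a + (i : ℕ)) ω) :=
    measurable_pi_lambda _ fun i => hY _
  have hμE : μ (evenB ⁻¹' A) = μ ((oddBlocks Y a l (m' + 1)) ⁻¹' A) := by
    rw [hFe, hFo, Set.preimage_comp, Set.preimage_comp]
    rw [← Measure.map_apply hVa (hgm hA_meas), ← Measure.map_apply hV0 (hgm hA_meas)]
    rw [← hstat 0 a n₀]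
  -- apply the independent block approximation
  have hO := hIB A hA_meas
  have hOle : (μ ((oddBlocks Y a l (m' + 1)) ⁻¹' A)).toReal ≤ (P A).toReal + (m' + 1) * β := by
    have h1 := (abs_le.mp hO).2
    have h2 : {ω | oddBlocks Y a l (m' + 1) ω ∈ A} = (oddBlocks Y a l (m' + 1)) ⁻¹' A := rfl
    rw [h2] at h1
    push_cast at h1 ⊢
    linarith
  -- final chain
  have hfin1 : (μ {ω | devTraj μ Y wStar a l (m' + 1) H ω > ε}).toReal ≤
      (μ ((oddBlocks Y a l (m' + 1)) ⁻¹' A)).toReal + (μ (evenB ⁻¹' A)).toReal := by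
    have hu : μ {ω | devTraj μ Y wStar a l (m' + 1) H ω > ε} ≤
        μ ((oddBlocks Y a l (m' + 1)) ⁻¹' A) + μ (evenB ⁻¹' A) :=
      le_trans (measure_mono hTsub) (measure_union_le _ _)
    have := ENNReal.toReal_mono
      (by exact ENNReal.add_ne_top.mpr ⟨measure_ne_top _ _, measure_ne_top _ _⟩) hu
    rwa [ENNReal.toReal_add (measure_ne_top _ _) (measure_ne_top _ _)] at this
  rw [hset]
  have : (μ {ω | devTraj μ Y wStar a l (m' + 1) H ω > ε}).toReal ≤
      2 * ((P A).toReal + (m' + 1) * β) := by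
    rw [hμE] at hfin1
    linarith
  push_cast at this ⊢
  linarith
end
end

section
/- (Lemma of Yu, blocking lemma.) Assume that for each i ∈ {1, …, m−1} and every measurable set C ⊆ E^i × E, |μ((Z_1, …, Z_i, Z_{i+1}) ∈ C) − ((joint law of (Z_1, …, Z_i)) ⊗ (law of Z_{i+1}))(C)| ≤ β. Then for every measurable set A ⊆ E^m, |μ((Z_1, …, Z_m) ∈ A) − (law(Z_1) ⊗ law(Z_2) ⊗ ⋯ ⊗ law(Z_m))(A)| ≤ (m−1)·β. -/
open MeasureTheory

noncomputable section

/-- Tensoring with a probability measure preserves a total-variation-type bound. -/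
lemma prod_diff_le_aux {X Y : Type*} [MeasurableSpace X] [MeasurableSpace Y]
    (P Q : Measure X) [IsProbabilityMeasure P] [IsProbabilityMeasure Q]
    (ν : Measure Y) [IsProbabilityMeasure ν] (c : ℝ)
    (h : ∀ B : Set X, MeasurableSet B → |(P B).toReal - (Q B).toReal| ≤ c)
    (C : Set (X × Y)) (hC : MeasurableSet C) :
    |((P.prod ν) C).toReal - ((Q.prod ν) C).toReal| ≤ c := by
  rw [Measure.prod_apply_symm hC, Measure.prod_apply_symm hC]
  set f : Y → ENNReal := fun y => P ((fun x => (x, y)) ⁻¹' C) with hfdef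
  set g : Y → ENNReal := fun y => Q ((fun x => (x, y)) ⁻¹' C) with hgdef
  have hf : Measurable f := measurable_measure_prodMk_right hC
  have hg : Measurable g := measurable_measure_prodMk_right hC
  have hfle : ∀ y, f y ≤ 1 := fun y => prob_le_one
  have hgle : ∀ y, g y ≤ 1 := fun y => prob_le_one
  have hfr : ∀ y, (f y).toReal ≤ 1 := fun y => by
    simpa using ENNReal.toReal_mono ENNReal.one_ne_top (hfle y)
  have hgr : ∀ y, (g y).toReal ≤ 1 := fun y => by
    simpa using ENNReal.toReal_mono ENNReal.one_ne_top (hgle y)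
  have h1 : (∫⁻ y, f y ∂ν).toReal = ∫ y, (f y).toReal ∂ν :=
    (integral_toReal hf.aemeasurable
      (Filter.Eventually.of_forall fun y => lt_of_le_of_lt (hfle y) ENNReal.one_lt_top)).symm
  have h2 : (∫⁻ y, g y ∂ν).toReal = ∫ y, (g y).toReal ∂ν :=
    (integral_toReal hg.aemeasurable
      (Filter.Eventually.of_forall fun y => lt_of_le_of_lt (hgle y) ENNReal.one_lt_top)).symm
  have intf : Integrable (fun y => (f y).toReal) ν :=
    ⟨(hf.ennreal_toReal).aestronglyMeasurable,
      HasFiniteIntegral.of_bounded (C := 1) (Filter.Eventually.of_forall fun y => by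
        simp only [Real.norm_eq_abs, abs_of_nonneg ENNReal.toReal_nonneg]
        exact hfr y)⟩
  have intg : Integrable (fun y => (g y).toReal) ν :=
    ⟨(hg.ennreal_toReal).aestronglyMeasurable,
      HasFiniteIntegral.of_bounded (C := 1) (Filter.Eventually.of_forall fun y => by
        simp only [Real.norm_eq_abs, abs_of_nonneg ENNReal.toReal_nonneg]
        exact hgr y)⟩
  rw [h1, h2, ← integral_sub intf intg]
  have hbound : ∀ y, |(f y).toReal - (g y).toReal| ≤ c := fun y =>
    h _ (measurable_prodMk_right hC)
  calc |∫ y, ((f y).toReal - (g y).toReal) ∂ν|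
      ≤ ∫ y, |(f y).toReal - (g y).toReal| ∂ν := by
        simpa [Real.norm_eq_abs] using
          norm_integral_le_integral_norm (fun y => (f y).toReal - (g y).toReal) (μ := ν)
    _ ≤ ∫ _, c ∂ν := integral_mono (intf.sub intg).abs (integrable_const c)
        (fun y => hbound y)
    _ = c := by simp

/-- Yu's blocking lemma, auxiliary version with `m + 1` random variables. -/
lemma blocking_aux {E Ω : Type*} [MeasurableSpace E] [MeasurableSpace Ω]
    (μ : Measure Ω) [IsProbabilityMeasure μ] (β : ℝ) (hβ : 0 ≤ β) :
    ∀ (m : ℕ) (Z : Fin (m + 1) → Ω → E), (∀ k, Measurable (Z k)) →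
    (∀ (i : ℕ) (_ : 1 ≤ i) (hi2 : i < m + 1),
      ∀ C : Set ((Fin i → E) × E), MeasurableSet C →
        |(μ {ω | ((fun k : Fin i => Z ⟨k.1, k.isLt.trans hi2⟩ ω), Z ⟨i, hi2⟩ ω) ∈ C}).toReal -
          (((μ.map (fun ω => fun k : Fin i => Z ⟨k.1, k.isLt.trans hi2⟩ ω)).prod
            (μ.map (Z ⟨i, hi2⟩))) C).toReal| ≤ β) →
    ∀ A : Set (Fin (m + 1) → E), MeasurableSet A →
      |(μ {ω | (fun k => Z k ω) ∈ A}).toReal -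
        (Measure.pi (fun k => μ.map (Z k)) A).toReal| ≤ (m : ℝ) * β := by
  intro m
  induction m with
  | zero =>
    intro Z hZ _ A hA
    have hjm : Measurable fun ω (k : Fin 1) => Z k ω :=
      measurable_pi_lambda _ fun k => hZ k
    haveI : IsProbabilityMeasure (μ.map (Z 0)) :=
      Measure.isProbabilityMeasure_map (hZ 0).aemeasurable
    set e := MeasurableEquiv.funUnique (Fin 1) E with hedef
    have hconst : (fun k : Fin 1 => μ.map (Z k)) = fun _ : Fin 1 => μ.map (Z 0) := by
      funext k
      rw [Fin.fin_one_eq_zero k]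
    have mp : MeasurePreserving e (Measure.pi fun _ : Fin 1 => μ.map (Z 0)) (μ.map (Z 0)) :=
      measurePreserving_funUnique (μ.map (Z 0)) (Fin 1)
    have mps : MeasurePreserving e.symm (μ.map (Z 0)) (Measure.pi fun _ : Fin 1 => μ.map (Z 0)) :=
      mp.symm e
    have hfun : (fun ω (k : Fin 1) => Z k ω) = fun ω => e.symm (Z 0 ω) := by
      funext ω k
      rw [Fin.fin_one_eq_zero k]
      rfl
    have hmap : μ.map (fun ω (k : Fin 1) => Z k ω) = Measure.pi fun k : Fin 1 => μ.map (Z k) := by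
      rw [hconst, ← mps.map_eq, hfun]
      exact (Measure.map_map e.symm.measurable (hZ 0)).symm
    have : μ {ω | (fun k => Z k ω) ∈ A} = Measure.pi (fun k : Fin 1 => μ.map (Z k)) A := by
      rw [← hmap, Measure.map_apply hjm hA]
      rfl
    rw [this]
    simp [hβ]
  | succ m ih =>
    intro Z hZ h A hA
    -- the first m+1 variables
    set Z' : Fin (m + 1) → Ω → E := fun k => Z k.castSucc with hZ'def
    have hZ' : ∀ k, Measurable (Z' k) := fun k => hZ _
    have h' : ∀ (i : ℕ) (_ : 1 ≤ i) (hi2 : i < m + 1),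
        ∀ C : Set ((Fin i → E) × E), MeasurableSet C →
          |(μ {ω | ((fun k : Fin i => Z' ⟨k.1, k.isLt.trans hi2⟩ ω), Z' ⟨i, hi2⟩ ω) ∈ C}).toReal -
            (((μ.map (fun ω => fun k : Fin i => Z' ⟨k.1, k.isLt.trans hi2⟩ ω)).prod
              (μ.map (Z' ⟨i, hi2⟩))) C).toReal| ≤ β := by
      intro i hi1 hi2 C hC
      exact h i hi1 (hi2.trans (Nat.lt_succ_self _)) C hC
    have IH := ih Z' hZ' h'
    -- measures
    have hjm' : Measurable fun ω (k : Fin (m + 1)) => Z' k ω :=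
      measurable_pi_lambda _ fun k => hZ' k
    have hjm : Measurable fun ω (k : Fin (m + 2)) => Z k ω :=
      measurable_pi_lambda _ fun k => hZ k
    set ZL : Ω → E := Z (Fin.last (m + 1)) with hZLdef
    set ν : Measure E := μ.map ZL with hνdef
    set P : Measure (Fin (m + 1) → E) := μ.map (fun ω (k : Fin (m + 1)) => Z' k ω) with hPdef
    set Q : Measure (Fin (m + 1) → E) := Measure.pi (fun k => μ.map (Z' k)) with hQdef
    set Pi2 : Measure (Fin (m + 2) → E) := Measure.pi (fun k => μ.map (Z k)) with hPi2def
    haveI : IsProbabilityMeasure ν := Measure.isProbabilityMeasure_map (hZ _).aemeasurable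
    haveI : IsProbabilityMeasure P := Measure.isProbabilityMeasure_map hjm'.aemeasurable
    haveI hQk : ∀ k : Fin (m + 1), IsProbabilityMeasure (μ.map (Z' k)) :=
      fun k => Measure.isProbabilityMeasure_map (hZ' k).aemeasurable
    haveI : IsProbabilityMeasure Q := by
      rw [hQdef]
      infer_instance
    haveI hPik : ∀ k : Fin (m + 2), IsProbabilityMeasure (μ.map (Z k)) :=
      fun k => Measure.isProbabilityMeasure_map (hZ k).aemeasurable
    haveI : IsProbabilityMeasure Pi2 := by
      rw [hPi2def]
      infer_instance
    -- the measurable equivalence (Fin (m+2) → E) ≃ᵐ (Fin (m+1) → E) × E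
    set e0 := MeasurableEquiv.piFinSuccAbove (fun _ : Fin (m + 2) => E) (Fin.last (m + 1))
      with he0def
    set e := e0.trans (MeasurableEquiv.prodComm : E × (Fin (m + 1) → E) ≃ᵐ (Fin (m + 1) → E) × E) with hedef
    set C : Set ((Fin (m + 1) → E) × E) := e.symm ⁻¹' A with hCdef
    have hC : MeasurableSet C := e.symm.measurable hA
    have hpre : ⇑e ⁻¹' C = A := by
      rw [hCdef, ← Set.preimage_comp]
      simp
    -- Step 1: the hypothesis at i = m + 1
    have hlast := h (m + 1) (Nat.le_add_left 1 m) (Nat.lt_succ_self _) C hC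
    have hstep1 : |(μ {ω | ((fun k : Fin (m + 1) => Z' k ω), ZL ω) ∈ C}).toReal -
        ((P.prod ν) C).toReal| ≤ β := hlast
    -- Step 2: tensor the inductive hypothesis with ν
    have hPB : ∀ B : Set (Fin (m + 1) → E), MeasurableSet B →
        |(P B).toReal - (Q B).toReal| ≤ (m : ℝ) * β := by
      intro B hB
      rw [hPdef, Measure.map_apply hjm' hB]
      exact IH B hB
    have hstep2 : |((P.prod ν) C).toReal - ((Q.prod ν) C).toReal| ≤ (m : ℝ) * β :=
      prod_diff_le_aux P Q ν ((m : ℝ) * β) hPB C hC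
    -- Step 3: identify (Q.prod ν) C with Pi2 A
    have mp := measurePreserving_piFinSuccAbove (fun k : Fin (m + 2) => μ.map (Z k))
      (Fin.last (m + 1))
    have hfam : (fun j : Fin (m + 1) => μ.map (Z ((Fin.last (m + 1)).succAbove j))) =
        fun j : Fin (m + 1) => μ.map (Z' j) := by
      funext j
      simp only [Fin.succAbove_last]
      rfl
    have hmapQ : Pi2.map e0 = ν.prod Q := by
      have := mp.map_eq
      rw [hfam] at this
      exact this
    have hstep3 : (Q.prod ν) C = Pi2 A := by
      have hswap : (ν.prod Q).map Prod.swap = Q.prod ν := Measure.prod_swap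
      rw [← hswap, Measure.map_apply measurable_swap hC, ← hmapQ,
        Measure.map_apply e0.measurable (measurable_swap hC), ← Set.preimage_comp]
      have hcomp : Prod.swap ∘ ⇑e0 = ⇑e := rfl
      rw [hcomp, hpre]
    -- Step 0: the left-hand set
    have hset : {ω | (fun k => Z k ω) ∈ A} =
        {ω | ((fun k : Fin (m + 1) => Z' k ω), ZL ω) ∈ C} := by
      ext ω
      simp only [Set.mem_setOf_eq]
      rw [← hpre]
      have : e (fun k => Z k ω) = ((fun k : Fin (m + 1) => Z' k ω), ZL ω) := by
        rw [hedef, he0def]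
        ext j
        · simp [MeasurableEquiv.trans_apply, MeasurableEquiv.prodComm,
            MeasurableEquiv.piFinSuccAbove]
          rfl
        · rfl
      constructor
      · intro hω
        have : e (fun k => Z k ω) ∈ C := hω
        rwa [‹e (fun k => Z k ω) = _›] at this
      · intro hω
        show e (fun k => Z k ω) ∈ C
        rwa [‹e (fun k => Z k ω) = _›]
    rw [hset]
    have := abs_sub_le (μ {ω | ((fun k : Fin (m + 1) => Z' k ω), ZL ω) ∈ C}).toReal
      ((P.prod ν) C).toReal (Pi2 A).toReal
    rw [← hstep3] at this ⊢
    calc |(μ {ω | ((fun k : Fin (m + 1) => Z' k ω), ZL ω) ∈ C}).toReal -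
          ((Q.prod ν) C).toReal|
        ≤ |(μ {ω | ((fun k : Fin (m + 1) => Z' k ω), ZL ω) ∈ C}).toReal -
            ((P.prod ν) C).toReal| + |((P.prod ν) C).toReal - ((Q.prod ν) C).toReal| := this
      _ ≤ β + (m : ℝ) * β := add_le_add hstep1 hstep2
      _ = ((m + 1 : ℕ) : ℝ) * β := by push_cast; ring

/-- Yu's blocking lemma: if each `Z_{i+1}` is nearly independent (up to `β`, in total
variation on measurable rectangles of the appropriate product space) of the preceding
block `(Z_1, …, Z_i)`, then the joint law of `(Z_1, …, Z_m)` is within `(m − 1)·β` of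
the product of the marginal laws, on every measurable set. -/
theorem blocking_lemma {E Ω : Type*} [MeasurableSpace E] [MeasurableSpace Ω]
    (μ : Measure Ω) [IsProbabilityMeasure μ] (m : ℕ) (hm : 2 ≤ m)
    (Z : Fin m → Ω → E) (hZ : ∀ k, Measurable (Z k)) (β : ℝ) (hβ : 0 ≤ β)
    (h : ∀ (i : ℕ) (_ : 1 ≤ i) (hi2 : i < m),
      ∀ C : Set ((Fin i → E) × E), MeasurableSet C →
        |(μ {ω | ((fun k : Fin i => Z ⟨k.1, k.isLt.trans hi2⟩ ω), Z ⟨i, hi2⟩ ω) ∈ C}).toReal -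
          (((μ.map (fun ω => fun k : Fin i => Z ⟨k.1, k.isLt.trans hi2⟩ ω)).prod
            (μ.map (Z ⟨i, hi2⟩))) C).toReal| ≤ β) :
    ∀ A : Set (Fin m → E), MeasurableSet A →
      |(μ {ω | (fun k => Z k ω) ∈ A}).toReal -
        (Measure.pi (fun k => μ.map (Z k)) A).toReal| ≤ (m - 1 : ℝ) * β := by
  obtain ⟨n, rfl⟩ : ∃ n, m = n + 1 := ⟨m - 1, by omega⟩
  intro A hA
  have := blocking_aux μ β hβ n Z hZ h A hA
  have hcast : ((n + 1 : ℕ) - 1 : ℝ) = (n : ℝ) := by push_cast; ring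
  rw [hcast]
  exact this
end
end
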